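/- Let R, S, M, N be n×n real matrices with R and S symmetric, M and N invertible, and M·Nᵀ = I − R·S. Define Z₁ := [[R, I],[Mᵀ, 0]] and P := [[S, N],[Nᵀ, −Nᵀ·R·M⁻ᵀ]]. Then Z₁ᵀ·P·Z₁ = [[R, I],[I, S]]; consequently, if the block matrix [[R, I],[I, S]] is positive definite, then P is positive definite. -/

import Mathlib

open Matrix

lemma posdef_conj_aux {m : Type*} [Fintype m] [DecidableEq m]
    {A B : Matrix m m ℝ} (hA : A.PosDef) (hB : IsUnit B) :
    (Bᵀ * A * B).PosDef := by
  have hBdet : IsUnit B.det := (Matrix.isUnit_iff_isUnit_det B).mp hB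
  rw [Matrix.posDef_iff_dotProduct_mulVec]
  constructor
  · have h := hA.isHermitian.eq
    simp only [Matrix.IsHermitian, conjTranspose_eq_transpose_of_trivial,
      Matrix.transpose_mul, Matrix.transpose_transpose] at h ⊢
    rw [h, mul_assoc]
  · intro x hx
    have hBx : B *ᵥ x ≠ 0 := by
      intro h
      apply hx
      have := congrArg (fun y => B⁻¹ *ᵥ y) h
      simpa [Matrix.mulVec_mulVec, Matrix.nonsing_inv_mul B hBdet] using this
    have h2 := hA.dotProduct_mulVec_pos hBx
    have key2 : star x ⬝ᵥ ((Bᵀ * A * B) *ᵥ x) = star (B *ᵥ x) ⬝ᵥ (A *ᵥ (B *ᵥ x)) := by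
      rw [star_trivial, star_trivial, Matrix.mul_assoc, ← Matrix.mulVec_mulVec,
        ← Matrix.mulVec_mulVec, Matrix.dotProduct_mulVec, Matrix.vecMul_transpose]
    rw [key2]
    exact h2

theorem Z1t_P_Z1_eq_and_posDef (n : ℕ) (R S M N : Matrix (Fin n) (Fin n) ℝ)
    (hR : R.IsSymm) (hS : S.IsSymm) (hM : IsUnit M) (hN : IsUnit N)
    (hMN : M * Nᵀ = 1 - R * S) :
    (fromBlocks R 1 Mᵀ 0)ᵀ * (fromBlocks S N Nᵀ (-(Nᵀ * R * (Mᵀ)⁻¹))) *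
        (fromBlocks R 1 Mᵀ 0) =
      fromBlocks R 1 1 S ∧
    ((fromBlocks R (1 : Matrix (Fin n) (Fin n) ℝ) 1 S).PosDef →
      (fromBlocks S N Nᵀ (-(Nᵀ * R * (Mᵀ)⁻¹))).PosDef) := by
  have hMdet : IsUnit M.det := (Matrix.isUnit_iff_isUnit_det M).mp hM
  have hMT : IsUnit Mᵀ := (Matrix.isUnit_iff_isUnit_det Mᵀ).mpr (by rw [Matrix.det_transpose]; exact hMdet)
  have hMTdet : IsUnit (Mᵀ).det := (Matrix.isUnit_iff_isUnit_det Mᵀ).mp hMT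
  have hNM : N * Mᵀ = 1 - S * R := by
    have := congrArg Matrix.transpose hMN
    simpa [Matrix.transpose_mul, hR.eq, hS.eq] using this
  have hMinv : Mᵀ * (Mᵀ)⁻¹ = 1 := Matrix.mul_nonsing_inv _ hMTdet
  -- main identity
  have key : (fromBlocks R 1 Mᵀ 0)ᵀ * (fromBlocks S N Nᵀ (-(Nᵀ * R * (Mᵀ)⁻¹))) *
        (fromBlocks R 1 Mᵀ 0) = fromBlocks R 1 1 S := by
    have hMinv' : (Mᵀ)⁻¹ * Mᵀ = 1 := Matrix.nonsing_inv_mul _ hMTdet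
    have hTL : (R * S + M * Nᵀ) * R + (R * N + M * -(Nᵀ * R * (Mᵀ)⁻¹)) * Mᵀ = R := by
      have expand : (R * S + M * Nᵀ) * R + (R * N + M * -(Nᵀ * R * (Mᵀ)⁻¹)) * Mᵀ
          = (R * S + M * Nᵀ) * R + R * (N * Mᵀ) - M * Nᵀ * (R * ((Mᵀ)⁻¹ * Mᵀ)) := by
        noncomm_ring
      rw [expand, hMinv', hMN, hNM]
      noncomm_ring
    have hTR : (R * S + M * Nᵀ) * 1 + (R * N + M * -(Nᵀ * R * (Mᵀ)⁻¹)) * 0 = 1 := by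
      rw [hMN]; noncomm_ring
    have hBL : (1 * S + 0 * Nᵀ) * R + (1 * N + 0 * -(Nᵀ * R * (Mᵀ)⁻¹)) * Mᵀ = 1 := by
      have e : (1 * S + 0 * Nᵀ) * R + (1 * N + 0 * -(Nᵀ * R * (Mᵀ)⁻¹)) * Mᵀ
          = S * R + N * Mᵀ := by noncomm_ring
      rw [e, hNM]; noncomm_ring
    have hBR : (1 * S + 0 * Nᵀ) * 1 + (1 * N + 0 * -(Nᵀ * R * (Mᵀ)⁻¹)) * 0 = S := by
      noncomm_ring
    rw [Matrix.fromBlocks_transpose, hR.eq, Matrix.transpose_one, Matrix.transpose_zero,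
      Matrix.transpose_transpose, Matrix.fromBlocks_multiply, Matrix.fromBlocks_multiply,
      hTL, hTR, hBL, hBR]
  refine ⟨key, fun hPD => ?_⟩
  -- Z₁ is invertible
  set Z : Matrix (Fin n ⊕ Fin n) (Fin n ⊕ Fin n) ℝ := fromBlocks R 1 Mᵀ 0 with hZ
  have hZinv : Z * (fromBlocks (0 : Matrix (Fin n) (Fin n) ℝ) (Mᵀ)⁻¹ 1 (-(R * (Mᵀ)⁻¹))) = 1 := by
    rw [hZ, Matrix.fromBlocks_multiply]
    have : R * (Mᵀ)⁻¹ + 1 * (-(R * (Mᵀ)⁻¹)) = 0 := by noncomm_ring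
    simp [hMinv, this, Matrix.fromBlocks_one]
  have hZunit : IsUnit Z := by
    refine ⟨⟨Z, _, hZinv, mul_eq_one_comm.mp hZinv⟩, rfl⟩
  have hZdet : IsUnit Z.det := (Matrix.isUnit_iff_isUnit_det Z).mp hZunit
  have hP : (fromBlocks S N Nᵀ (-(Nᵀ * R * (Mᵀ)⁻¹))) =
      (Z⁻¹)ᵀ * (fromBlocks R 1 1 S) * Z⁻¹ := by
    rw [← key]
    have h1 : Z⁻¹ * Z = 1 := Matrix.nonsing_inv_mul _ hZdet
    have h2 : Z * Z⁻¹ = 1 := Matrix.mul_nonsing_inv _ hZdet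
    have h1t : (Z⁻¹)ᵀ * Zᵀ = 1 := by
      rw [← Matrix.transpose_mul, h2, Matrix.transpose_one]
    calc (fromBlocks S N Nᵀ (-(Nᵀ * R * (Mᵀ)⁻¹)))
        = ((Z⁻¹)ᵀ * Zᵀ) * (fromBlocks S N Nᵀ (-(Nᵀ * R * (Mᵀ)⁻¹))) * (Z * Z⁻¹) := by
          rw [h1t, h2, one_mul, mul_one]
      _ = (Z⁻¹)ᵀ * (Zᵀ * (fromBlocks S N Nᵀ (-(Nᵀ * R * (Mᵀ)⁻¹))) * Z) * Z⁻¹ := by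
          noncomm_ring
  rw [hP]
  exact posdef_conj_aux hPD ((Matrix.isUnit_nonsing_inv_iff.mpr hZunit))
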